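/- Let a divisible homogeneous good be split between two agents with entitlements b_1 = 1/3 and b_2 = 2/3, both having the valuation v(x) = √x on [0,1]. Then: (i) the unique weighted envy-free allocation, i.e. the unique (x_1, x_2) with x_1, x_2 ≥ 0, x_1 + x_2 = 1, v(x_1) ≥ (1/2)·v(x_2), and v(x_2) ≥ 2·v(x_1), is (1/5, 4/5); and (ii) this allocation has strictly lower weighted Nash social welfare than the proportional allocation: (1/5)^{1/6} · (4/5)^{1/3} < (1/3)^{1/6} · (2/3)^{1/3}. -/
import Mathlib


/-- two agents with entitlements (1/3, 2/3) and common valuation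
`v(x) = √x`: (i) the unique weighted envy-free allocation is (1/5, 4/5), and
(ii) it has strictly lower weighted Nash social welfare than the proportional
allocation: (1/5)^{1/6} · (4/5)^{1/3} < (1/3)^{1/6} · (2/3)^{1/3}. -/
theorem stmt_18 :
    -- (1/5, 4/5) is weighted envy-free
    ((1/2) * Real.sqrt (4/5) ≤ Real.sqrt (1/5) ∧
      2 * Real.sqrt (1/5) ≤ Real.sqrt (4/5)) ∧
    -- and it is the unique weighted envy-free allocation
    (∀ x1 x2 : ℝ, 0 ≤ x1 → 0 ≤ x2 → x1 + x2 = 1 →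
      (1/2) * Real.sqrt x2 ≤ Real.sqrt x1 →
      2 * Real.sqrt x1 ≤ Real.sqrt x2 →
      x1 = 1/5 ∧ x2 = 4/5) ∧
    -- its WNSW is strictly lower than that of the proportional allocation
    ((1/5 : ℝ) ^ ((1:ℝ)/6) * (4/5 : ℝ) ^ ((1:ℝ)/3)
      < (1/3 : ℝ) ^ ((1:ℝ)/6) * (2/3 : ℝ) ^ ((1:ℝ)/3)) := by
  have hkey : Real.sqrt (4/5) = 2 * Real.sqrt (1/5) := by
    rw [show (4/5 : ℝ) = 4 * (1/5) by norm_num, Real.sqrt_mul (by norm_num)]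
    rw [show (4 : ℝ) = 2 ^ 2 by norm_num, Real.sqrt_sq (by norm_num)]
  refine ⟨⟨by rw [hkey]; ring_nf; exact le_refl _, by rw [hkey]⟩, ?_, ?_⟩
  · intro x1 x2 h1 h2 hs ha hb
    have hsq2 : Real.sqrt x2 ^ 2 = x2 := Real.sq_sqrt h2
    have hsq1 : Real.sqrt x1 ^ 2 = x1 := Real.sq_sqrt h1
    have heq : Real.sqrt x2 = 2 * Real.sqrt x1 := le_antisymm (by linarith) hb
    have : x2 = 4 * x1 := by
      rw [← hsq2, ← hsq1, heq]; ring
    constructor <;> linarith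
  · have hL : (0:ℝ) ≤ (1/5 : ℝ) ^ ((1:ℝ)/6) * (4/5 : ℝ) ^ ((1:ℝ)/3) := by positivity
    have hR : (0:ℝ) ≤ (1/3 : ℝ) ^ ((1:ℝ)/6) * (2/3 : ℝ) ^ ((1:ℝ)/3) := by positivity
    have h6 : ((1/5 : ℝ) ^ ((1:ℝ)/6) * (4/5 : ℝ) ^ ((1:ℝ)/3)) ^ (6:ℕ)
        < ((1/3 : ℝ) ^ ((1:ℝ)/6) * (2/3 : ℝ) ^ ((1:ℝ)/3)) ^ (6:ℕ) := by
      rw [mul_pow, mul_pow, ← Real.rpow_natCast ((1/5 : ℝ) ^ ((1:ℝ)/6)) 6,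
        ← Real.rpow_natCast ((4/5 : ℝ) ^ ((1:ℝ)/3)) 6,
        ← Real.rpow_natCast ((1/3 : ℝ) ^ ((1:ℝ)/6)) 6,
        ← Real.rpow_natCast ((2/3 : ℝ) ^ ((1:ℝ)/3)) 6,
        ← Real.rpow_mul (by norm_num), ← Real.rpow_mul (by norm_num),
        ← Real.rpow_mul (by norm_num), ← Real.rpow_mul (by norm_num)]
      norm_num
    by_contra hcon
    push_neg at hcon
    exact absurd h6 (not_lt.2 (pow_le_pow_left₀ hR hcon 6))
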